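/- Zone successors are well-defined: for every zone Z over a finite set X of clocks, every clock constraint g over X, and every R ⊆ X, the set Z' = { [R]v + δ | v ∈ Z, v ⊨ g, δ ∈ ℝ≥0 } is again a zone over X. In other words, the symbolic successor of a zone along a timed-automaton transition (guard intersection, followed by reset, followed by time elapse) is a zone. -/

import Mathlib

/-- The five comparison operators `<, ≤, =, ≥, >`. -/
inductive CmpOp where
  | lt | le | eq | ge | gt

/-- Interpretation of a comparison operator over the reals. -/
def CmpOp.holds : CmpOp → ℝ → ℝ → Prop
  | .lt, a, b => a < b
  | .le, a, b => a ≤ b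
  | .eq, a, b => a = b
  | .ge, a, b => a ≥ b
  | .gt, a, b => a > b

/-- A valuation over the set of clocks `X` assigns a nonnegative real to each clock. -/
abbrev Val (X : Type) := X → NNReal

/-- Atomic zone constraints: `x # c` or `x - y # c` with `c : ℤ`. -/
inductive ZoneAtom (X : Type) where
  | single (x : X) (r : CmpOp) (c : ℤ)
  | diff (x y : X) (r : CmpOp) (c : ℤ)

/-- Satisfaction of an atomic zone constraint, differences taken in `ℝ`. -/
def ZoneAtom.sat {X : Type} (v : Val X) : ZoneAtom X → Prop
  | .single x r c => r.holds (v x : ℝ) (c : ℝ)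
  | .diff x y r c => r.holds ((v x : ℝ) - (v y : ℝ)) (c : ℝ)

/-- A zone over `X` is a set of valuations described by a finite conjunction of
atomic zone constraints. -/
def IsZone {X : Type} (Z : Set (Val X)) : Prop :=
  ∃ φ : List (ZoneAtom X), Z = { v | ∀ a ∈ φ, a.sat v }

/-- An atomic clock constraint `x # c` with `c : ℕ`. -/
structure ClockAtom (X : Type) where
  x : X
  r : CmpOp
  c : ℕ

/-- A clock constraint is a finite conjunction of atomic clock constraints. -/
abbrev ClockConstraint (X : Type) := List (ClockAtom X)

/-- A valuation satisfies a clock constraint when it satisfies every conjunct. -/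
def ClockConstraint.sat {X : Type} (v : Val X) (g : ClockConstraint X) : Prop :=
  ∀ a ∈ g, a.r.holds (v a.x : ℝ) (a.c : ℝ)

/- `[R]v`: reset the clocks in `R` to `0`, leave the others unchanged. -/
open Classical in
noncomputable def resetVal {X : Type} (R : Set X) (v : Val X) : Val X :=
  fun x => if x ∈ R then 0 else v x

/-! ### Difference atoms over an arbitrary variable type -/

section DAtoms

open Classical

variable {Y : Type}

/-- Evaluate an optional variable: `none` denotes the constant `0`. -/
def EV (v : Y → ℝ) : Option Y → ℝ
  | none => 0
  | some y => v y

/-- A difference atom `p - q # c` where `p, q` are variables or the constant 0. -/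
structure DAtom (Y : Type) where
  p : Option Y
  q : Option Y
  r : CmpOp
  c : ℤ

def DAtom.sat (v : Y → ℝ) (a : DAtom Y) : Prop :=
  a.r.holds (EV v a.p - EV v a.q) (a.c : ℝ)

def DSat (φ : List (DAtom Y)) (v : Y → ℝ) : Prop := ∀ a ∈ φ, a.sat v

/-- `z` is mentioned in atom `a`. -/
def DMem (z : Y) (a : DAtom Y) : Prop := a.p = some z ∨ a.q = some z

lemma EV_update_ne {v : Y → ℝ} {y0 : Y} {t : ℝ} {o : Option Y} (h : o ≠ some y0) :
    EV (Function.update v y0 t) o = EV v o := by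
  cases o with
  | none => rfl
  | some z =>
    have : z ≠ y0 := fun hz => h (by rw [hz])
    simp [EV, Function.update_of_ne this]


@[simp] lemma EV_some (v : Y → ℝ) (y : Y) : EV v (some y) = v y := rfl
@[simp] lemma EV_none (v : Y → ℝ) : EV v none = 0 := rfl

/-- A bound: (strict?, term, integer offset). -/
abbrev Bnd (Y : Type) := Bool × Option Y × ℤ

def lowerSat (v : Y → ℝ) (t : ℝ) (b : Bnd Y) : Prop :=
  if b.1 then EV v b.2.1 + (b.2.2 : ℝ) < t else EV v b.2.1 + (b.2.2 : ℝ) ≤ t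

def upperSat (v : Y → ℝ) (t : ℝ) (b : Bnd Y) : Prop :=
  if b.1 then t < EV v b.2.1 + (b.2.2 : ℝ) else t ≤ EV v b.2.1 + (b.2.2 : ℝ)

open Classical in
noncomputable def classify (y0 : Y) (a : DAtom Y) :
    List (DAtom Y) × List (Bnd Y) × List (Bnd Y) :=
  if _hp : a.p = some y0 then
    if _hq : a.q = some y0 then ([⟨none, none, a.r, a.c⟩], [], [])
    else
      match a.r with
      | .lt => ([], [], [(true, a.q, a.c)])
      | .le => ([], [], [(false, a.q, a.c)])
      | .eq => ([], [(false, a.q, a.c)], [(false, a.q, a.c)])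
      | .ge => ([], [(false, a.q, a.c)], [])
      | .gt => ([], [(true, a.q, a.c)], [])
  else
    if _hq : a.q = some y0 then
      match a.r with
      | .lt => ([], [(true, a.p, -a.c)], [])
      | .le => ([], [(false, a.p, -a.c)], [])
      | .eq => ([], [(false, a.p, -a.c)], [(false, a.p, -a.c)])
      | .ge => ([], [], [(false, a.p, -a.c)])
      | .gt => ([], [], [(true, a.p, -a.c)])
    else ([a], [], [])

lemma classify_spec (y0 : Y) (a : DAtom Y) (v : Y → ℝ) (t : ℝ) :
    a.sat (Function.update v y0 t) ↔
      ((∀ b ∈ (classify y0 a).1, b.sat v) ∧ (∀ b ∈ (classify y0 a).2.1, lowerSat v t b) ∧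
        (∀ b ∈ (classify y0 a).2.2, upperSat v t b)) := by
  obtain ⟨p, q, r, c⟩ := a
  by_cases hp : p = some y0 <;> by_cases hq : q = some y0
  · subst hp; subst hq
    simp [classify, DAtom.sat, Function.update_self, lowerSat, upperSat]
  · subst hp
    have hevq : EV (Function.update v y0 t) q = EV v q := EV_update_ne hq
    cases r <;>
      simp [classify, hq, DAtom.sat, Function.update_self, hevq, lowerSat, upperSat,
        CmpOp.holds] <;>
      constructor <;> intro h <;> push_cast at * <;> first
        | linarith
        | (constructor <;> linarith)
        | (obtain ⟨h1, h2⟩ := h; linarith)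
  · subst hq
    have hevp : EV (Function.update v y0 t) p = EV v p := EV_update_ne hp
    cases r <;>
      simp [classify, hp, DAtom.sat, Function.update_self, hevp, lowerSat, upperSat,
        CmpOp.holds] <;>
      constructor <;> intro h <;> push_cast at * <;> first
        | linarith
        | (constructor <;> linarith)
        | (obtain ⟨h1, h2⟩ := h; linarith)
  · have hevp : EV (Function.update v y0 t) p = EV v p := EV_update_ne hp
    have hevq : EV (Function.update v y0 t) q = EV v q := EV_update_ne hq
    simp [classify, hp, hq, DAtom.sat, hevp, hevq, lowerSat, upperSat]

lemma classify_mem (y0 : Y) (a : DAtom Y) :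
    (∀ b ∈ (classify y0 a).1, ∀ z, DMem z b → z ≠ y0 ∧ DMem z a) ∧
    (∀ b ∈ (classify y0 a).2.1, ∀ z, b.2.1 = some z → z ≠ y0 ∧ DMem z a) ∧
    (∀ b ∈ (classify y0 a).2.2, ∀ z, b.2.1 = some z → z ≠ y0 ∧ DMem z a) := by
  obtain ⟨p, q, r, c⟩ := a
  by_cases hp : p = some y0 <;> by_cases hq : q = some y0
  · subst hp; subst hq
    refine ⟨?_, by simp [classify], by simp [classify]⟩
    intro b hb z hz
    simp [classify] at hb
    subst hb
    rcases hz with h | h <;> simp_all [DMem]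
  · subst hp
    cases r <;>
      refine ⟨by simp [classify, hq], ?_, ?_⟩ <;> intro b hb z hz <;>
        simp [classify, hq] at hb <;> subst hb <;> simp at hz <;>
        exact ⟨fun h => hq (by rw [hz, h]), Or.inr hz⟩
  · subst hq
    cases r <;>
      refine ⟨by simp [classify, hp], ?_, ?_⟩ <;> intro b hb z hz <;>
        simp [classify, hp] at hb <;> subst hb <;> simp at hz <;>
        exact ⟨fun h => hp (by rw [hz, h]), Or.inl hz⟩
  · refine ⟨?_, by simp [classify, hp, hq], by simp [classify, hp, hq]⟩
    intro b hb z hz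
    simp [classify, hp, hq] at hb
    subst hb
    refine ⟨?_, hz⟩
    rcases hz with h | h
    · exact fun he => hp (by simp at h; rw [h, he])
    · exact fun he => hq (by simp at h; rw [h, he])

/-! ### Fourier–Motzkin core over ℝ -/

lemma list_exists_max {α β : Type*} [LinearOrder β] (f : α → β) :
    ∀ (l : List α), l ≠ [] → ∃ p ∈ l, ∀ x ∈ l, f x ≤ f p := by
  intro l
  induction l with
  | nil => intro h; exact absurd rfl h
  | cons a l ih =>
    intro _
    rcases eq_or_ne l [] with hl | hl
    · subst hl
      exact ⟨a, by simp, by simp⟩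
    · obtain ⟨p, hp, hmax⟩ := ih hl
      rcases le_total (f a) (f p) with h | h
      · exact ⟨p, by simp [hp], by
          intro x hx
          rcases List.mem_cons.mp hx with rfl | hx
          · exact h
          · exact hmax x hx⟩
      · exact ⟨a, by simp, by
          intro x hx
          rcases List.mem_cons.mp hx with rfl | hx
          · exact le_rfl
          · exact (hmax x hx).trans h⟩

lemma list_exists_min {α β : Type*} [LinearOrder β] (f : α → β) (l : List α) (h : l ≠ []) :
    ∃ p ∈ l, ∀ x ∈ l, f p ≤ f x :=
  list_exists_max (β := βᵒᵈ) f l h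

lemma list_exists_lb (l : List (Bool × ℝ)) : ∃ m : ℝ, ∀ q ∈ l, m ≤ q.2 := by
  induction l with
  | nil => exact ⟨0, by simp⟩
  | cons a l ih =>
    obtain ⟨m, hm⟩ := ih
    refine ⟨min m a.2, ?_⟩
    intro q hq
    rcases List.mem_cons.mp hq with rfl | hq
    · exact min_le_right _ _
    · exact (min_le_left _ _).trans (hm q hq)

lemma list_exists_ub (l : List (Bool × ℝ)) : ∃ m : ℝ, ∀ q ∈ l, q.2 ≤ m := by
  induction l with
  | nil => exact ⟨0, by simp⟩
  | cons a l ih =>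
    obtain ⟨m, hm⟩ := ih
    refine ⟨max m a.2, ?_⟩
    intro q hq
    rcases List.mem_cons.mp hq with rfl | hq
    · exact le_max_right _ _
    · exact (hm q hq).trans (le_max_left _ _)

/-- Key for lower bounds. -/
noncomputable def lkey (p : Bool × ℝ) : ℝ ×ₗ ℤ := toLex (p.2, if p.1 then 1 else 0)
/-- Key for upper bounds. -/
noncomputable def ukey (q : Bool × ℝ) : ℝ ×ₗ ℤ := toLex (q.2, if q.1 then -1 else 0)

lemma fm_core (L U : List (Bool × ℝ))
    (h : ∀ p ∈ L, ∀ q ∈ U, if p.1 || q.1 then p.2 < q.2 else p.2 ≤ q.2) :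
    ∃ t : ℝ, (∀ p ∈ L, if p.1 then p.2 < t else p.2 ≤ t) ∧
      (∀ q ∈ U, if q.1 then t < q.2 else t ≤ q.2) := by
  rcases eq_or_ne L [] with hL | hL
  · subst hL
    obtain ⟨m, hm⟩ := list_exists_lb U
    refine ⟨m - 1, by simp, ?_⟩
    intro q hq
    have := hm q hq
    split <;> linarith
  rcases eq_or_ne U [] with hU | hU
  · subst hU
    obtain ⟨m, hm⟩ := list_exists_ub L
    refine ⟨m + 1, ?_, by simp⟩
    intro p hp
    have := hm p hp
    split <;> linarith
  obtain ⟨p0, hp0, hpmax⟩ := list_exists_max lkey L hL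
  obtain ⟨q0, hq0, hqmin⟩ := list_exists_min ukey U hU
  have h0 := h p0 hp0 q0 hq0
  rcases lt_or_ge p0.2 q0.2 with hlt | hle
  · refine ⟨(p0.2 + q0.2) / 2, ?_, ?_⟩
    · intro p hp
      have hk := hpmax p hp
      have h1 : p.2 ≤ p0.2 := by
        rw [lkey, lkey, Prod.Lex.le_iff] at hk
        rcases hk with hk | ⟨hk, _⟩
        · exact hk.le
        · exact hk.le
      split <;> linarith
    · intro q hq
      have hk := hqmin q hq
      have h1 : q0.2 ≤ q.2 := by
        rw [ukey, ukey, Prod.Lex.le_iff] at hk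
        rcases hk with hk | ⟨hk, _⟩
        · exact hk.le
        · exact hk.le
      split <;> linarith
  · have hp1 : p0.1 = false := by
      cases hp1 : p0.1
      · rfl
      · rw [hp1] at h0; simp at h0; linarith
    have hq1 : q0.1 = false := by
      cases hq1 : q0.1
      · rfl
      · rw [hq1] at h0; simp at h0; linarith
    rw [hp1, hq1] at h0
    simp at h0
    have heq : p0.2 = q0.2 := le_antisymm h0 hle
    refine ⟨p0.2, ?_, ?_⟩
    · intro p hp
      have hk := hpmax p hp
      rw [lkey, lkey, hp1, Prod.Lex.le_iff] at hk
      by_cases h1 : p.1 = true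
      · simp [h1] at hk ⊢
        exact hk
      · simp [h1] at hk ⊢
        rcases hk with hk | hk
        · exact hk.le
        · exact hk.le
    · intro q hq
      have hk := hqmin q hq
      rw [ukey, ukey, hq1, Prod.Lex.le_iff] at hk
      by_cases h1 : q.1 = true
      · simp [h1] at hk ⊢
        linarith
      · simp [h1] at hk ⊢
        rcases hk with hk | hk
        · linarith
        · linarith

/-! ### Eliminating one variable -/

/-- Combine a lower and an upper bound into an atom. -/
def mkPair (b b' : Bnd Y) : DAtom Y :=
  ⟨b.2.1, b'.2.1, if b.1 || b'.1 then .lt else .le, b'.2.2 - b.2.2⟩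

lemma mkPair_sat_iff (b b' : Bnd Y) (v : Y → ℝ) :
    (mkPair b b').sat v ↔
      (if b.1 || b'.1 then EV v b.2.1 + (b.2.2 : ℝ) < EV v b'.2.1 + (b'.2.2 : ℝ)
        else EV v b.2.1 + (b.2.2 : ℝ) ≤ EV v b'.2.1 + (b'.2.2 : ℝ)) := by
  by_cases hb : (b.1 || b'.1) = true <;>
    simp [mkPair, DAtom.sat, hb, CmpOp.holds] <;> push_cast <;>
    constructor <;> intro h <;> linarith

lemma elim_one (y0 : Y) (φ : List (DAtom Y)) :
    ∃ ψ : List (DAtom Y),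
      (∀ a ∈ ψ, ∀ z : Y, DMem z a → z ≠ y0 ∧ ∃ b ∈ φ, DMem z b) ∧
      ∀ v : Y → ℝ, DSat ψ v ↔ ∃ t : ℝ, DSat φ (Function.update v y0 t) := by
  classical
  set K := φ.flatMap (fun a => (classify y0 a).1) with hK
  set LB := φ.flatMap (fun a => (classify y0 a).2.1) with hLB
  set UB := φ.flatMap (fun a => (classify y0 a).2.2) with hUB
  refine ⟨K ++ LB.flatMap (fun b => UB.map (mkPair b)), ?_, ?_⟩
  · intro a ha z hz
    rcases List.mem_append.mp ha with ha | ha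
    · obtain ⟨b, hb, hab⟩ := List.mem_flatMap.mp ha
      obtain ⟨h1, h2⟩ := (classify_mem y0 b).1 a hab z hz
      exact ⟨h1, b, hb, h2⟩
    · obtain ⟨bl, hbl, ha2⟩ := List.mem_flatMap.mp ha
      obtain ⟨bu, hbu, hab⟩ := List.mem_map.mp ha2
      obtain ⟨al, hal, hbl2⟩ := List.mem_flatMap.mp hbl
      obtain ⟨au, hau, hbu2⟩ := List.mem_flatMap.mp hbu
      subst hab
      rcases hz with hz | hz
      · obtain ⟨h1, h2⟩ := (classify_mem y0 al).2.1 bl hbl2 z hz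
        exact ⟨h1, al, hal, h2⟩
      · obtain ⟨h1, h2⟩ := (classify_mem y0 au).2.2 bu hbu2 z hz
        exact ⟨h1, au, hau, h2⟩
  · intro v
    constructor
    · intro hsat
      have hKsat : ∀ a ∈ K, a.sat v := fun a ha =>
        hsat a (List.mem_append.mpr (Or.inl ha))
      have hPair : ∀ bl ∈ LB, ∀ bu ∈ UB, (mkPair bl bu).sat v := by
        intro bl hbl bu hbu
        exact hsat _ (List.mem_append.mpr (Or.inr (List.mem_flatMap.mpr
          ⟨bl, hbl, List.mem_map.mpr ⟨bu, hbu, rfl⟩⟩)))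
      -- apply fm_core
      obtain ⟨t, htl, htu⟩ := fm_core
        (LB.map (fun b => (b.1, EV v b.2.1 + (b.2.2 : ℝ))))
        (UB.map (fun b => (b.1, EV v b.2.1 + (b.2.2 : ℝ))))
        (by
          intro p hp q hq
          obtain ⟨bl, hbl, rfl⟩ := List.mem_map.mp hp
          obtain ⟨bu, hbu, rfl⟩ := List.mem_map.mp hq
          have := (mkPair_sat_iff bl bu v).mp (hPair bl hbl bu hbu)
          exact this)
      refine ⟨t, ?_⟩
      intro a ha
      rw [classify_spec y0 a v t]
      refine ⟨?_, ?_, ?_⟩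
      · intro b hb
        exact hKsat b (List.mem_flatMap.mpr ⟨a, ha, hb⟩)
      · intro b hb
        have := htl _ (List.mem_map.mpr ⟨b, List.mem_flatMap.mpr ⟨a, ha, hb⟩, rfl⟩)
        exact this
      · intro b hb
        have := htu _ (List.mem_map.mpr ⟨b, List.mem_flatMap.mpr ⟨a, ha, hb⟩, rfl⟩)
        exact this
    · rintro ⟨t, ht⟩
      intro a ha
      rcases List.mem_append.mp ha with ha | ha
      · obtain ⟨b, hb, hab⟩ := List.mem_flatMap.mp ha
        exact ((classify_spec y0 b v t).mp (ht b hb)).1 a hab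
      · obtain ⟨bl, hbl, ha2⟩ := List.mem_flatMap.mp ha
        obtain ⟨bu, hbu, hab⟩ := List.mem_map.mp ha2
        subst hab
        obtain ⟨al, hal, hbl2⟩ := List.mem_flatMap.mp hbl
        obtain ⟨au, hau, hbu2⟩ := List.mem_flatMap.mp hbu
        have hl := ((classify_spec y0 al v t).mp (ht al hal)).2.1 bl hbl2
        have hu := ((classify_spec y0 au v t).mp (ht au hau)).2.2 bu hbu2
        rw [mkPair_sat_iff]
        unfold lowerSat at hl
        unfold upperSat at hu
        by_cases h1 : bl.1 = true <;> by_cases h2 : bu.1 = true <;>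
          simp [h1, h2] at hl hu ⊢ <;> linarith

/-! ### Eliminating a list of variables -/

lemma elim_many (ys : List Y) (φ : List (DAtom Y)) :
    ∃ ψ : List (DAtom Y),
      (∀ a ∈ ψ, ∀ z : Y, DMem z a → z ∉ ys ∧ ∃ b ∈ φ, DMem z b) ∧
      ∀ v : Y → ℝ, DSat ψ v ↔ ∃ v' : Y → ℝ, (∀ z, z ∉ ys → v' z = v z) ∧ DSat φ v' := by
  induction ys generalizing φ with
  | nil =>
    refine ⟨φ, fun a ha z hz => ⟨by simp, a, ha, hz⟩, ?_⟩
    intro v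
    constructor
    · intro h
      exact ⟨v, fun z _ => rfl, h⟩
    · rintro ⟨v', hv', h⟩
      have : v' = v := funext fun z => hv' z (by simp)
      rwa [this] at h
  | cons y0 ys ih =>
    obtain ⟨φ₁, hmem1, hiff1⟩ := elim_one y0 φ
    obtain ⟨ψ, hmem, hiff⟩ := ih φ₁
    refine ⟨ψ, ?_, ?_⟩
    · intro a ha z hz
      obtain ⟨hzys, b, hb, hzb⟩ := hmem a ha z hz
      obtain ⟨hzy0, c, hc, hzc⟩ := hmem1 b hb z hzb
      refine ⟨?_, c, hc, hzc⟩
      intro hmemys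
      rcases List.mem_cons.mp hmemys with rfl | h
      · exact hzy0 rfl
      · exact hzys h
    · intro v
      rw [hiff]
      constructor
      · rintro ⟨v', hv', h1⟩
        obtain ⟨t, ht⟩ := (hiff1 v').mp h1
        refine ⟨Function.update v' y0 t, ?_, ht⟩
        intro z hz
        have hzy : z ≠ y0 := fun h => hz (h ▸ (List.mem_cons_self : y0 ∈ y0 :: ys))
        have hzys : z ∉ ys := fun h => hz (List.mem_cons_of_mem _ h)
        rw [Function.update_of_ne hzy]
        exact hv' z hzys
      · rintro ⟨v'', hv'', h2⟩
        refine ⟨Function.update v'' y0 (v y0), ?_, ?_⟩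
        · intro z hz
          rcases eq_or_ne z y0 with rfl | hzy
          · rw [Function.update_self]
          · rw [Function.update_of_ne hzy]
            exact hv'' z (fun h => by
              rcases List.mem_cons.mp h with h | h
              · exact hzy h
              · exact hz h)
        · rw [hiff1]
          refine ⟨v'' y0, ?_⟩
          rw [Function.update_idem, Function.update_eq_self]
          exact h2

end DAtoms

/-! ### Translation back to zone atoms -/

def CmpOp.flip : CmpOp → CmpOp
  | .lt => .gt
  | .le => .ge
  | .eq => .eq
  | .ge => .le
  | .gt => .lt

def CmpOp.zholds : CmpOp → ℤ → Bool
  | .lt, c => decide (0 < c)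
  | .le, c => decide (0 ≤ c)
  | .eq, c => decide (0 = c)
  | .ge, c => decide (c ≤ 0)
  | .gt, c => decide (c < 0)

lemma CmpOp.zholds_iff (r : CmpOp) (c : ℤ) : r.holds 0 (c : ℝ) ↔ r.zholds c = true := by
  cases r <;> simp [CmpOp.holds, CmpOp.zholds] <;> exact_mod_cast Iff.rfl

abbrev YT (X : Type) := X ⊕ (X ⊕ Unit)

def embv {X : Type} (w : Val X) : YT X → ℝ :=
  Sum.elim (fun x => (w x : ℝ)) (fun _ => 0)

def trAtom {X : Type} (x0 : X) (a : DAtom (YT X)) : List (ZoneAtom X) :=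
  match a.p, a.q with
  | some (Sum.inl x), some (Sum.inl y) => [.diff x y a.r a.c]
  | some (Sum.inl x), none => [.single x a.r a.c]
  | none, some (Sum.inl y) => [.single y a.r.flip (-a.c)]
  | none, none => if a.r.zholds a.c then [] else [.single x0 .lt 0]
  | _, _ => []

lemma trAtom_spec {X : Type} (x0 : X) (a : DAtom (YT X))
    (h : ∀ z, DMem z a → ∃ x, z = Sum.inl x) (w : Val X) :
    (∀ b ∈ trAtom x0 a, b.sat w) ↔ a.sat (embv w) := by
  obtain ⟨p, q, r, c⟩ := a
  have hp : p = none ∨ ∃ x, p = some (Sum.inl x) := by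
    cases p with
    | none => exact Or.inl rfl
    | some z =>
      obtain ⟨x, hx⟩ := h z (Or.inl rfl)
      exact Or.inr ⟨x, by rw [hx]⟩
  have hq : q = none ∨ ∃ x, q = some (Sum.inl x) := by
    cases q with
    | none => exact Or.inl rfl
    | some z =>
      obtain ⟨x, hx⟩ := h z (Or.inr rfl)
      exact Or.inr ⟨x, by rw [hx]⟩
  rcases hp with rfl | ⟨x, rfl⟩ <;> rcases hq with rfl | ⟨y, rfl⟩
  · -- none none
    by_cases hz : r.zholds c = true
    · simp only [trAtom, hz, if_true, List.not_mem_nil, false_implies, implies_true, true_iff,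
        DAtom.sat, EV_none, sub_zero]
      exact (CmpOp.zholds_iff r c).mpr hz
    · constructor
      · intro hall
        have := hall (.single x0 .lt 0) (by simp [trAtom, hz])
        simp only [ZoneAtom.sat, CmpOp.holds] at this
        exact absurd this (by push_cast; exact not_lt.mpr (w x0).2)
      · intro hh
        simp only [DAtom.sat, EV_none, sub_zero] at hh
        exact absurd ((CmpOp.zholds_iff r c).mp hh) hz
  · -- none, some y
    simp only [trAtom, List.mem_singleton, forall_eq, ZoneAtom.sat, DAtom.sat, EV, embv,
      Sum.elim_inl]
    cases r <;> simp [CmpOp.holds, CmpOp.flip] <;> push_cast <;>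
      constructor <;> intro hh <;> linarith
  · -- some x, none
    simp [trAtom, ZoneAtom.sat, DAtom.sat, EV, embv]
  · -- some some
    simp [trAtom, ZoneAtom.sat, DAtom.sat, EV, embv]

/-! ### Encoding the successor relation as a difference constraint system -/

open Classical in
noncomputable def tvar {X : Type} (R : Set X) (x : X) : Option (YT X) :=
  if x ∈ R then some (Sum.inr (Sum.inl x)) else some (Sum.inl x)

def dvar (X : Type) : Option (YT X) := some (Sum.inr (Sum.inr ()))

open Classical in
noncomputable def bigPhi {X : Type} [Fintype X] (R : Set X) (φZ : List (ZoneAtom X))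
    (g : ClockConstraint X) : List (DAtom (YT X)) :=
  φZ.map (fun a => match a with
    | .single x r c => ⟨tvar R x, dvar X, r, c⟩
    | .diff x y r c => ⟨tvar R x, tvar R y, r, c⟩)
  ++ g.map (fun a => ⟨tvar R a.x, dvar X, a.r, (a.c : ℤ)⟩)
  ++ (Finset.univ : Finset X).toList.map (fun x => ⟨tvar R x, dvar X, .ge, 0⟩)
  ++ [⟨dvar X, none, .ge, 0⟩]
  ++ ((Finset.univ : Finset X).toList.filter (fun x => decide (x ∈ R))).map
      (fun x => ⟨some (Sum.inl x), dvar X, .eq, 0⟩)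

noncomputable def ysList (X : Type) [Fintype X] : List (YT X) :=
  ((Finset.univ : Finset (X ⊕ Unit)).toList).map Sum.inr

lemma mem_ysList {X : Type} [Fintype X] (z : X ⊕ Unit) : Sum.inr z ∈ ysList X := by
  simp [ysList]

lemma inl_not_mem_ysList {X : Type} [Fintype X] (x : X) : Sum.inl x ∉ ysList X := by
  simp [ysList]

section BigPhiMem

variable {X : Type} [Fintype X] (R : Set X) (φZ : List (ZoneAtom X)) (g : ClockConstraint X)

lemma mem_bigPhi_A_single {x : X} {r : CmpOp} {c : ℤ} (ha : ZoneAtom.single x r c ∈ φZ) :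
    (⟨tvar R x, dvar X, r, c⟩ : DAtom (YT X)) ∈ bigPhi R φZ g := by
  unfold bigPhi
  exact List.mem_append_left _ (List.mem_append_left _ (List.mem_append_left _
    (List.mem_append_left _ (List.mem_map.mpr ⟨_, ha, rfl⟩))))

lemma mem_bigPhi_A_diff {x y : X} {r : CmpOp} {c : ℤ} (ha : ZoneAtom.diff x y r c ∈ φZ) :
    (⟨tvar R x, tvar R y, r, c⟩ : DAtom (YT X)) ∈ bigPhi R φZ g := by
  unfold bigPhi
  exact List.mem_append_left _ (List.mem_append_left _ (List.mem_append_left _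
    (List.mem_append_left _ (List.mem_map.mpr ⟨_, ha, rfl⟩))))

lemma mem_bigPhi_B {a : ClockAtom X} (ha : a ∈ g) :
    (⟨tvar R a.x, dvar X, a.r, (a.c : ℤ)⟩ : DAtom (YT X)) ∈ bigPhi R φZ g := by
  unfold bigPhi
  exact List.mem_append_left _ (List.mem_append_left _ (List.mem_append_left _
    (List.mem_append_right _ (List.mem_map.mpr ⟨a, ha, rfl⟩))))

lemma mem_bigPhi_C (x : X) :
    (⟨tvar R x, dvar X, .ge, 0⟩ : DAtom (YT X)) ∈ bigPhi R φZ g := by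
  unfold bigPhi
  exact List.mem_append_left _ (List.mem_append_left _ (List.mem_append_right _
    (List.mem_map.mpr ⟨x, by simp, rfl⟩)))

lemma mem_bigPhi_D : (⟨dvar X, none, .ge, 0⟩ : DAtom (YT X)) ∈ bigPhi R φZ g := by
  unfold bigPhi
  exact List.mem_append_left _ (List.mem_append_right _ (by simp))

lemma mem_bigPhi_E {x : X} (hx : x ∈ R) :
    (⟨some (Sum.inl x), dvar X, .eq, 0⟩ : DAtom (YT X)) ∈ bigPhi R φZ g := by
  classical
  unfold bigPhi
  exact List.mem_append_right _
    (List.mem_map.mpr ⟨x, List.mem_filter.mpr ⟨by simp, by simp [hx]⟩, rfl⟩)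

end BigPhiMem

lemma bigPhi_spec {X : Type} [Fintype X] (R : Set X) (φZ : List (ZoneAtom X))
    (g : ClockConstraint X) (w : Val X) :
    (∃ v' : YT X → ℝ, (∀ z, z ∉ ysList X → v' z = embv w z) ∧ DSat (bigPhi R φZ g) v')
      ↔ (∃ v, (∀ a ∈ φZ, a.sat v) ∧ ClockConstraint.sat v g ∧
          ∃ δ : NNReal, w = fun x => resetVal R v x + δ) := by
  classical
  constructor
  · rintro ⟨v', hag, hsat⟩
    have hagl : ∀ x : X, v' (Sum.inl x) = (w x : ℝ) := fun x =>
      hag _ (inl_not_mem_ysList x)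
    set δr : ℝ := v' (Sum.inr (Sum.inr ())) with hδr
    have hEVd : EV v' (dvar X) = δr := rfl
    have hδpos : 0 ≤ δr := by
      have := hsat _ (mem_bigPhi_D R φZ g)
      simp only [DAtom.sat, hEVd, EV_none, CmpOp.holds, sub_zero, Int.cast_zero] at this
      exact this
    have hnn : ∀ x : X, δr ≤ EV v' (tvar R x) := by
      intro x
      have := hsat _ (mem_bigPhi_C R φZ g x)
      simp only [DAtom.sat, hEVd, CmpOp.holds, Int.cast_zero, ge_iff_le] at this
      linarith
    refine ⟨fun x => ⟨EV v' (tvar R x) - δr, by linarith [hnn x]⟩, ?_, ?_, ⟨δr, hδpos⟩, ?_⟩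
    · intro a ha
      cases a with
      | single x r c =>
        have hba := hsat _ (mem_bigPhi_A_single R φZ g ha)
        simp only [DAtom.sat, hEVd] at hba
        simp only [ZoneAtom.sat]
        exact hba
      | diff x y r c =>
        have hba := hsat _ (mem_bigPhi_A_diff R φZ g ha)
        simp only [DAtom.sat] at hba
        simp only [ZoneAtom.sat, NNReal.coe_mk]
        show r.holds ((EV v' (tvar R x) - δr) - (EV v' (tvar R y) - δr)) (c : ℝ)
        rw [show EV v' (tvar R x) - δr - (EV v' (tvar R y) - δr)
            = EV v' (tvar R x) - EV v' (tvar R y) by ring]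
        exact hba
    · intro a ha
      have hba := hsat _ (mem_bigPhi_B R φZ g ha)
      simp only [DAtom.sat, hEVd] at hba
      simp only [NNReal.coe_mk]
      rw [show (((a.c : ℤ)) : ℝ) = ((a.c : ℕ) : ℝ) by push_cast; ring] at hba
      exact hba
    · funext x
      apply NNReal.coe_injective
      by_cases hx : x ∈ R
      · have := hsat _ (mem_bigPhi_E R φZ g hx)
        simp only [DAtom.sat, hEVd, CmpOp.holds, EV_some, Int.cast_zero, hagl x] at this
        refine Eq.trans ?_ (NNReal.coe_add _ _).symm
        refine Eq.trans ?_ (congrArg (fun r : NNReal => (r : ℝ) + _)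
          (show resetVal R _ x = 0 from if_pos hx)).symm
        show (w x : ℝ) = 0 + δr
        linarith
      · refine Eq.trans ?_ (NNReal.coe_add _ _).symm
        refine Eq.trans ?_ (congrArg (fun r : NNReal => (r : ℝ) + _)
          (show resetVal R _ x = _ from if_neg hx)).symm
        show (w x : ℝ) = (EV v' (tvar R x) - δr) + δr
        have ht : EV v' (tvar R x) = (w x : ℝ) := by
          rw [tvar, if_neg hx, EV_some, hagl x]
        rw [ht]
        ring
  · rintro ⟨v, hvZ, hvg, δ, hw⟩
    set v' : YT X → ℝ := fun y => match y with
      | Sum.inl x => (w x : ℝ)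
      | Sum.inr (Sum.inl x) => (v x : ℝ) + (δ : ℝ)
      | Sum.inr (Sum.inr _) => (δ : ℝ) with hv'
    have hwx : ∀ x : X, (w x : ℝ) = (resetVal R v x : ℝ) + (δ : ℝ) := by
      intro x
      rw [hw]
      push_cast
      ring
    have het : ∀ x : X, EV v' (tvar R x) = (v x : ℝ) + (δ : ℝ) := by
      intro x
      by_cases hx : x ∈ R
      · rw [tvar, if_pos hx]; rfl
      · rw [tvar, if_neg hx, EV_some]
        show (w x : ℝ) = (v x : ℝ) + (δ : ℝ)
        rw [hwx x, resetVal, if_neg hx]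
    have hed : EV v' (dvar X) = (δ : ℝ) := rfl
    refine ⟨v', ?_, ?_⟩
    · intro z hz
      cases z with
      | inl x => rfl
      | inr z => exact absurd (mem_ysList z) hz
    · intro a ha
      unfold bigPhi at ha
      rcases List.mem_append.mp ha with ha | haE
      · rcases List.mem_append.mp ha with ha | haD
        · rcases List.mem_append.mp ha with ha | haC
          · rcases List.mem_append.mp ha with haA | haB
            · obtain ⟨b, hb, heq⟩ := List.mem_map.mp haA
              cases b with
              | single x r c =>
                subst heq
                have := hvZ _ hb
                simp only [ZoneAtom.sat] at this
                simp only [DAtom.sat, het, hed]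
                rw [show (v x : ℝ) + (δ : ℝ) - (δ : ℝ) = (v x : ℝ) by ring]
                exact this
              | diff x y r c =>
                subst heq
                have := hvZ _ hb
                simp only [ZoneAtom.sat] at this
                simp only [DAtom.sat, het]
                rw [show (v x : ℝ) + (δ : ℝ) - ((v y : ℝ) + (δ : ℝ))
                    = (v x : ℝ) - (v y : ℝ) by ring]
                exact this
            · obtain ⟨b, hb, heq⟩ := List.mem_map.mp haB
              subst heq
              have := hvg _ hb
              simp only [DAtom.sat, het, hed]
              rw [show (v b.x : ℝ) + (δ : ℝ) - (δ : ℝ) = (v b.x : ℝ) by ring]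
              rw [show (((b.c : ℤ)) : ℝ) = ((b.c : ℕ) : ℝ) by push_cast; ring]
              exact this
          · obtain ⟨x, _, heq⟩ := List.mem_map.mp haC
            subst heq
            simp only [DAtom.sat, het, hed, CmpOp.holds, Int.cast_zero, ge_iff_le]
            have h1 : (0:ℝ) ≤ (v x : ℝ) := (v x).2
            linarith
        · simp only [List.mem_singleton] at haD
          subst haD
          simp only [DAtom.sat, hed, EV_none, CmpOp.holds, Int.cast_zero, sub_zero, ge_iff_le]
          exact δ.2
      · obtain ⟨x, hxf, heq⟩ := List.mem_map.mp haE
        subst heq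
        have hx : x ∈ R := by
          have := (List.mem_filter.mp hxf).2
          simpa using this
        simp only [DAtom.sat, hed, EV_some, CmpOp.holds, Int.cast_zero]
        show (w x : ℝ) - (δ : ℝ) = 0
        rw [hwx x, resetVal, if_pos hx]
        simp

/-- zone successors are well-defined: guard intersection, reset, then
time elapse applied to a zone yields a zone. -/
theorem isZone_successor {X : Type} [Fintype X] (Z : Set (Val X)) (hZ : IsZone Z)
    (g : ClockConstraint X) (R : Set X) :
    IsZone { w : Val X | ∃ v ∈ Z, ClockConstraint.sat v g ∧
      ∃ δ : NNReal, w = fun x => resetVal R v x + δ } := by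
  classical
  obtain ⟨φZ, hφZ⟩ := hZ
  rcases isEmpty_or_nonempty X with hE | hNE
  · refine ⟨[], ?_⟩
    ext w
    simp only [Set.mem_setOf_eq, List.not_mem_nil, false_implies, implies_true, iff_true]
    refine ⟨w, ?_, ?_, 0, ?_⟩
    · rw [hφZ]
      intro a _
      cases a with
      | single x r c => exact (hE.false x).elim
      | diff x y r c => exact (hE.false x).elim
    · intro a _
      exact (hE.false a.x).elim
    · funext x
      exact (hE.false x).elim
  · obtain ⟨x0⟩ := hNE
    obtain ⟨ψ, hmem, hiff⟩ := elim_many (ysList X) (bigPhi R φZ g)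
    refine ⟨ψ.flatMap (trAtom x0), ?_⟩
    ext w
    have honly : ∀ a ∈ ψ, ∀ z, DMem z a → ∃ x, z = Sum.inl x := by
      intro a ha z hz
      have h1 := (hmem a ha z hz).1
      cases z with
      | inl x => exact ⟨x, rfl⟩
      | inr z => exact absurd (mem_ysList z) h1
    have hstep1 : (∀ b ∈ ψ.flatMap (trAtom x0), b.sat w) ↔ DSat ψ (embv w) := by
      constructor
      · intro hall a ha
        exact (trAtom_spec x0 a (honly a ha) w).mp
          (fun b hb => hall b (List.mem_flatMap.mpr ⟨a, ha, hb⟩)) 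
      · intro hall b hb
        obtain ⟨a, ha, hba⟩ := List.mem_flatMap.mp hb
        exact (trAtom_spec x0 a (honly a ha) w).mpr (hall a ha) b hba
    simp only [Set.mem_setOf_eq]
    rw [hstep1, hiff, bigPhi_spec]
    constructor
    · rintro ⟨v, h1, h2, h3⟩
      rw [hφZ] at h1
      exact ⟨v, h1, h2, h3⟩
    · rintro ⟨v, h1, h2, h3⟩
      exact ⟨v, by rw [hφZ]; exact h1, h2, h3⟩
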